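/- Let Q(α) = I − αQ where Q = μI + [[0, Aᵀ],[−A, 0]] with μ > 0 and A ∈ ℝ^{m×n}. Then the spectral radius ρ(Q(α)) = √((μ² + ‖A‖²)α² − 2μα + 1), and ρ(Q(α)) < 1 if and only if 0 < α < 2μ/(μ² + ‖A‖²); moreover the minimal spectral radius over admissible α equals √(1 − μ²/(μ² + ‖A‖²)), attained at α = μ/(μ² + ‖A‖²). -/

import Mathlib

open Matrix

/-- The matrix `Q = μI + [[0, Aᵀ],[−A, 0]]` of the quadratic game. -/
noncomputable def Qgame {n m : ℕ} (μ : ℝ) (A : Matrix (Fin m) (Fin n) ℝ) :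
    Matrix (Fin n ⊕ Fin m) (Fin n ⊕ Fin m) ℝ :=
  μ • (1 : Matrix (Fin n ⊕ Fin m) (Fin n ⊕ Fin m) ℝ) + Matrix.fromBlocks 0 Aᵀ (-A) 0

/-- The spectral (ℓ²-operator) norm of a real matrix. -/
noncomputable def spectralNormMat {n m : ℕ} (A : Matrix (Fin m) (Fin n) ℝ) : ℝ :=
  ‖LinearMap.toContinuousLinearMap (Matrix.toEuclideanLin A)‖

/-- The spectral radius (over ℂ) of a real matrix. -/
noncomputable def rhoMat {n m : ℕ}
    (M : Matrix (Fin n ⊕ Fin m) (Fin n ⊕ Fin m) ℝ) : ENNReal :=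
  spectralRadius ℂ (M.map Complex.ofReal)

section NormKey
open ContinuousLinearMap
open scoped InnerProductSpace ComplexConjugate
open ContinuousLinearMap
open scoped InnerProductSpace ComplexConjugate

variable {E : Type*} [NormedAddCommGroup E] [InnerProductSpace ℂ E] [CompleteSpace E]

lemma norm_key [Nontrivial E] (T : E →L[ℂ] E) {r s : ℝ} (hr : 0 ≤ r) (hs : 0 ≤ s) :
    ‖(r:ℂ) • (1 : E →L[ℂ] E) + (s:ℂ) • (adjoint T * T)‖ = r + s * ‖T‖^2 := by
  set Q : E →L[ℂ] E := (r:ℂ) • (1 : E →L[ℂ] E) + (s:ℂ) • (adjoint T * T) with hQ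
  have key : ∀ z : E, r * ‖z‖^2 + s * ‖T z‖^2 ≤ ‖Q‖ * ‖z‖^2 := by
    intro z
    have h1 : RCLike.re ⟪z, Q z⟫_ℂ = r * ‖z‖^2 + s * ‖T z‖^2 := by
      simp only [hQ, ContinuousLinearMap.add_apply, ContinuousLinearMap.smul_apply,
        ContinuousLinearMap.one_apply, ContinuousLinearMap.mul_apply, inner_add_right,
        inner_smul_right, adjoint_inner_right, map_add, RCLike.re_ofReal_mul,
        inner_self_eq_norm_sq]
      simp [Complex.mul_re, ← inner_self_eq_norm_sq (𝕜 := ℂ), inner_self_im]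
    calc r * ‖z‖^2 + s * ‖T z‖^2 = RCLike.re ⟪z, Q z⟫_ℂ := h1.symm
      _ ≤ ‖⟪z, Q z⟫_ℂ‖ := RCLike.re_le_norm _
      _ ≤ ‖z‖ * ‖Q z‖ := norm_inner_le_norm _ _
      _ ≤ ‖z‖ * (‖Q‖ * ‖z‖) := mul_le_mul_of_nonneg_left (Q.le_opNorm z) (norm_nonneg z)
      _ = ‖Q‖ * ‖z‖^2 := by ring
  have hrQ : r ≤ ‖Q‖ := by
    obtain ⟨z, hz⟩ := exists_ne (0 : E)
    have h := key z
    have hz2 : 0 < ‖z‖^2 := pow_pos (norm_pos_iff.mpr hz) 2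
    nlinarith [mul_nonneg hs (sq_nonneg ‖T z‖)]
  have hQr : 0 ≤ (‖Q‖ - r)/s → True := fun _ => trivial
  refine le_antisymm ?_ ?_
  · calc ‖Q‖ ≤ ‖(r:ℂ) • (1 : E →L[ℂ] E)‖ + ‖(s:ℂ) • (adjoint T * T)‖ := norm_add_le _ _
      _ = r + s * ‖T‖^2 := by
          rw [norm_smul, norm_smul, norm_one, mul_def, norm_adjoint_comp_self]
          simp [Complex.norm_real, abs_of_nonneg hr, abs_of_nonneg hs, sq]
  · rcases hs.eq_or_lt with rfl | hs'
    · simpa using hrQ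
    · have h4 : 0 ≤ ‖Q‖ - r := sub_nonneg.mpr hrQ
      have hT : ‖T‖ ≤ Real.sqrt ((‖Q‖ - r)/s) := by
        refine T.opNorm_le_bound (Real.sqrt_nonneg _) fun z => ?_
        have h := key z
        have h2 : ‖T z‖^2 ≤ ((‖Q‖ - r)/s) * ‖z‖^2 := by
          rw [div_mul_eq_mul_div, le_div_iff₀ hs']
          nlinarith
        calc ‖T z‖ = Real.sqrt (‖T z‖^2) := (Real.sqrt_sq (norm_nonneg _)).symm
          _ ≤ Real.sqrt (((‖Q‖ - r)/s) * ‖z‖^2) := Real.sqrt_le_sqrt h2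
          _ = Real.sqrt ((‖Q‖ - r)/s) * ‖z‖ := by
              rw [Real.sqrt_mul (div_nonneg h4 hs'.le), Real.sqrt_sq (norm_nonneg _)]
      have h3 : ‖T‖^2 ≤ (‖Q‖ - r)/s := by
        have := pow_le_pow_left₀ (norm_nonneg T) hT 2
        rwa [Real.sq_sqrt (div_nonneg h4 hs'.le)] at this
      have h5 := mul_le_mul_of_nonneg_left h3 hs'.le
      rw [mul_div_cancel₀ _ (ne_of_gt hs')] at h5
      linarith

end NormKey

section L2Lemmas
open scoped Matrix.Norms.L2Operator


section helpers
variable {𝕜 : Type*} [RCLike 𝕜] {p q : Type*} [Fintype p] [Fintype q] [DecidableEq q]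

lemma euc_nsq (y : EuclideanSpace 𝕜 p) : ‖y‖^2 = ∑ i, ‖y i‖^2 := by
  rw [EuclideanSpace.norm_eq, Real.sq_sqrt]
  positivity

lemma eq_of_sq_eq {a b : ℝ} (ha : 0 ≤ a) (hb : 0 ≤ b) (h : a^2 = b^2) : a = b := by
  nlinarith

lemma le_of_sq_le_sq' {a b : ℝ} (hb : 0 ≤ b) (h : a^2 ≤ b^2) (ha : 0 ≤ a) : a ≤ b := by
  nlinarith

lemma opNorm_le_of_mulVec (M : Matrix p q 𝕜) {c : ℝ} (hc : 0 ≤ c)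
    (h : ∀ x : EuclideanSpace 𝕜 q,
      ‖((EuclideanSpace.equiv p 𝕜).symm (M *ᵥ x) : EuclideanSpace 𝕜 p)‖ ≤ c * ‖x‖) :
    ‖M‖ ≤ c := by
  rw [Matrix.l2_opNorm_def]
  exact ContinuousLinearMap.opNorm_le_bound _ hc h

end helpers

section complexify
variable {n m : ℕ}

lemma norm_map_ofReal (A : Matrix (Fin m) (Fin n) ℝ) :
    ‖A.map Complex.ofReal‖ = ‖A‖ := by
  refine le_antisymm ?_ ?_
  · refine opNorm_le_of_mulVec _ (norm_nonneg A) fun z => ?_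
    set zr : EuclideanSpace ℝ (Fin n) := (EuclideanSpace.equiv _ ℝ).symm fun j => (z j).re
    set zi : EuclideanSpace ℝ (Fin n) := (EuclideanSpace.equiv _ ℝ).symm fun j => (z j).im
    have hcomp : ∀ k, (A.map Complex.ofReal *ᵥ z) k
        = Complex.ofReal ((A *ᵥ (fun j => (z j).re)) k)
          + Complex.ofReal ((A *ᵥ (fun j => (z j).im)) k) * Complex.I := by
      intro k
      apply Complex.ext <;>
      simp [Matrix.mulVec, dotProduct, Matrix.map_apply, Complex.re_sum, Complex.im_sum,
        Complex.mul_re, Complex.mul_im, Finset.mul_sum]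
    set zc : EuclideanSpace ℂ (Fin m) :=
      (EuclideanSpace.equiv _ ℂ).symm (A.map Complex.ofReal *ᵥ z) with hzc
    have h1 : ‖zc‖^2 = ‖((EuclideanSpace.equiv _ ℝ).symm (A *ᵥ zr) : EuclideanSpace ℝ (Fin m))‖^2
        + ‖((EuclideanSpace.equiv _ ℝ).symm (A *ᵥ zi) : EuclideanSpace ℝ (Fin m))‖^2 := by
      rw [euc_nsq, euc_nsq, euc_nsq, ← Finset.sum_add_distrib]
      refine Finset.sum_congr rfl fun k _ => ?_
      show ‖(A.map Complex.ofReal *ᵥ z) k‖^2 = _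
      rw [hcomp k]
      simp [Complex.sq_norm, Complex.normSq_add_mul_I, Real.norm_eq_abs, sq_abs]
      rfl
    have h2 := Matrix.l2_opNorm_mulVec A zr
    have h3 := Matrix.l2_opNorm_mulVec A zi
    have hz : ‖z‖^2 = ‖zr‖^2 + ‖zi‖^2 := by
      rw [euc_nsq, euc_nsq, euc_nsq, ← Finset.sum_add_distrib]
      refine Finset.sum_congr rfl fun j _ => ?_
      show ‖z j‖^2 = ‖(z j).re‖^2 + ‖(z j).im‖^2
      rw [Complex.sq_norm, Complex.normSq_apply]
      simp [Real.norm_eq_abs, sq_abs]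
      ring
    refine le_of_sq_le_sq' (by positivity) ?_ (norm_nonneg _)
    have h2' := pow_le_pow_left₀ (norm_nonneg _) h2 2
    have h3' := pow_le_pow_left₀ (norm_nonneg _) h3 2
    have hgoal : (‖A‖ * ‖z‖)^2 = (‖A‖*‖zr‖)^2 + (‖A‖*‖zi‖)^2 := by
      rw [mul_pow, mul_pow, mul_pow, hz]; ring
    rw [h1, hgoal]
    exact add_le_add h2' h3'
  · refine opNorm_le_of_mulVec _ (norm_nonneg _) fun v => ?_
    set vc : EuclideanSpace ℂ (Fin n) :=
      (EuclideanSpace.equiv _ ℂ).symm fun j => ((v j : ℝ) : ℂ) with hvc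
    have hv : ‖vc‖ = ‖v‖ := by
      refine eq_of_sq_eq (norm_nonneg _) (norm_nonneg _) ?_
      rw [euc_nsq, euc_nsq]
      refine Finset.sum_congr rfl fun j _ => ?_
      show ‖((v j : ℝ) : ℂ)‖^2 = _
      simp [Complex.norm_real]
    have happ : ∀ k, (A.map Complex.ofReal *ᵥ vc) k = (((A *ᵥ v) k : ℝ) : ℂ) := by
      intro k
      simp only [Matrix.mulVec, dotProduct, Matrix.map_apply]
      push_cast
      rfl
    have heq : ‖((EuclideanSpace.equiv _ ℝ).symm (A *ᵥ v) : EuclideanSpace ℝ (Fin m))‖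
        = ‖((EuclideanSpace.equiv _ ℂ).symm (A.map Complex.ofReal *ᵥ vc) :
            EuclideanSpace ℂ (Fin m))‖ := by
      refine eq_of_sq_eq (norm_nonneg _) (norm_nonneg _) ?_
      rw [euc_nsq, euc_nsq]
      refine Finset.sum_congr rfl fun k _ => ?_
      show ‖(A *ᵥ v) k‖^2 = ‖(A.map Complex.ofReal *ᵥ vc) k‖^2
      rw [happ k]
      simp [Complex.norm_real]
    rw [heq, ← hv]
    exact Matrix.l2_opNorm_mulVec _ _

end complexify

section blocks
variable {n m : ℕ}

lemma norm_skew_block (Ac : Matrix (Fin m) (Fin n) ℂ) :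
    ‖Matrix.fromBlocks (0 : Matrix (Fin n) (Fin n) ℂ) Acᴴ (-Ac) 0‖ = ‖Ac‖ := by
  set B : Matrix (Fin n ⊕ Fin m) (Fin n ⊕ Fin m) ℂ := Matrix.fromBlocks 0 Acᴴ (-Ac) 0 with hB
  refine le_antisymm ?_ ?_
  · refine opNorm_le_of_mulVec _ (norm_nonneg Ac) fun z => ?_
    set x : EuclideanSpace ℂ (Fin n) := (EuclideanSpace.equiv _ ℂ).symm fun j => z (Sum.inl j)
    set y : EuclideanSpace ℂ (Fin m) := (EuclideanSpace.equiv _ ℂ).symm fun k => z (Sum.inr k)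
    have hmul : B *ᵥ z = Sum.elim (Acᴴ *ᵥ fun k => z (Sum.inr k)) (-(Ac *ᵥ fun j => z (Sum.inl j))) := by
      have := Matrix.fromBlocks_mulVec (0 : Matrix (Fin n) (Fin n) ℂ) Acᴴ (-Ac)
        (0 : Matrix (Fin m) (Fin m) ℂ) z
      simpa [Matrix.neg_mulVec, Function.comp_def] using this
    have hsum : ‖((EuclideanSpace.equiv _ ℂ).symm (B *ᵥ z) : EuclideanSpace ℂ (Fin n ⊕ Fin m))‖^2
        = ‖((EuclideanSpace.equiv _ ℂ).symm (Acᴴ *ᵥ y) : EuclideanSpace ℂ (Fin n))‖^2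
          + ‖((EuclideanSpace.equiv _ ℂ).symm (Ac *ᵥ x) : EuclideanSpace ℂ (Fin m))‖^2 := by
      rw [euc_nsq, euc_nsq, euc_nsq]
      rw [Fintype.sum_sum_type]
      congr 1
      · refine Finset.sum_congr rfl fun i _ => ?_
        show ‖(B *ᵥ z) (Sum.inl i)‖^2 = ‖(Acᴴ *ᵥ fun k => z (Sum.inr k)) i‖^2
        rw [hmul]
        simp
      · refine Finset.sum_congr rfl fun k _ => ?_
        show ‖(B *ᵥ z) (Sum.inr k)‖^2 = ‖(Ac *ᵥ fun j => z (Sum.inl j)) k‖^2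
        rw [hmul]
        simp
    have hz : ‖z‖^2 = ‖x‖^2 + ‖y‖^2 := by
      rw [euc_nsq, euc_nsq, euc_nsq, Fintype.sum_sum_type]
      rfl
    have h2 := Matrix.l2_opNorm_mulVec Acᴴ y
    have h3 := Matrix.l2_opNorm_mulVec Ac x
    rw [Matrix.l2_opNorm_conjTranspose] at h2
    refine le_of_sq_le_sq' (by positivity) ?_ (norm_nonneg _)
    have h2' := pow_le_pow_left₀ (norm_nonneg _) h2 2
    have h3' := pow_le_pow_left₀ (norm_nonneg _) h3 2
    have hgoal : (‖Ac‖ * ‖z‖)^2 = (‖Ac‖*‖y‖)^2 + (‖Ac‖*‖x‖)^2 := by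
      rw [mul_pow, mul_pow, mul_pow, hz]; ring
    rw [hsum, hgoal]
    exact add_le_add h2' h3'
  · refine opNorm_le_of_mulVec _ (norm_nonneg B) fun x => ?_
    set z : EuclideanSpace ℂ (Fin n ⊕ Fin m) :=
      (EuclideanSpace.equiv _ ℂ).symm (Sum.elim (fun j : Fin n => x j) (fun _ : Fin m => (0:ℂ))) with hzdef
    have hmul : B *ᵥ z = Sum.elim (fun _ : Fin n => (0:ℂ)) (-(Ac *ᵥ x)) := by
      have := Matrix.fromBlocks_mulVec (0 : Matrix (Fin n) (Fin n) ℂ) Acᴴ (-Ac)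
        (0 : Matrix (Fin m) (Fin m) ℂ) (Sum.elim (fun j : Fin n => x j) (fun _ : Fin m => (0:ℂ)))
      have hx0 : (Acᴴ *ᵥ fun _ : Fin m => (0:ℂ)) = 0 := Matrix.mulVec_zero Acᴴ
      simp [Matrix.neg_mulVec, Function.comp_def, Matrix.mulVec_zero, hx0] at this
      exact this
    have hzn : ‖z‖ = ‖x‖ := by
      refine eq_of_sq_eq (norm_nonneg _) (norm_nonneg _) ?_
      rw [euc_nsq, euc_nsq, Fintype.sum_sum_type]
      show (∑ j, ‖(Sum.elim (fun j : Fin n => x j) (fun _ : Fin m => (0:ℂ))) (Sum.inl j)‖^2)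
        + (∑ k, ‖(Sum.elim (fun j : Fin n => x j) (fun _ : Fin m => (0:ℂ))) (Sum.inr k)‖^2) = _
      simp
    have heq : ‖((EuclideanSpace.equiv _ ℂ).symm (Ac *ᵥ x) : EuclideanSpace ℂ (Fin m))‖
        = ‖((EuclideanSpace.equiv _ ℂ).symm (B *ᵥ z) : EuclideanSpace ℂ (Fin n ⊕ Fin m))‖ := by
      refine eq_of_sq_eq (norm_nonneg _) (norm_nonneg _) ?_
      rw [euc_nsq, euc_nsq, Fintype.sum_sum_type]
      have h1 : ∀ i : Fin n, ‖((EuclideanSpace.equiv _ ℂ).symm (B *ᵥ z) :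
          EuclideanSpace ℂ (Fin n ⊕ Fin m)) (Sum.inl i)‖^2 = 0 := by
        intro i
        show ‖(B *ᵥ z) (Sum.inl i)‖^2 = 0
        rw [hmul]
        simp
      have h2 : ∀ k : Fin m, ‖((EuclideanSpace.equiv _ ℂ).symm (B *ᵥ z) :
          EuclideanSpace ℂ (Fin n ⊕ Fin m)) (Sum.inr k)‖^2
          = ‖((EuclideanSpace.equiv _ ℂ).symm (Ac *ᵥ x) : EuclideanSpace ℂ (Fin m)) k‖^2 := by
        intro k
        show ‖(B *ᵥ z) (Sum.inr k)‖^2 = ‖(Ac *ᵥ x) k‖^2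
        rw [hmul]
        simp
      simp only [h2]
      rw [Finset.sum_congr rfl fun i _ => h1 i]
      simp
    rw [heq, ← hzn]
    exact Matrix.l2_opNorm_mulVec _ _

end blocks

lemma rho_eq {n m : ℕ} (hnm : 0 < n + m) (μ : ℝ) (A : Matrix (Fin m) (Fin n) ℝ) (α : ℝ) :
    rhoMat (1 - α • Qgame μ A) =
      ENNReal.ofReal (Real.sqrt ((μ^2 + spectralNormMat A ^ 2) * α^2 - 2*μ*α + 1)) := by
  classical
  letI : CStarAlgebra (Matrix (Fin n ⊕ Fin m) (Fin n ⊕ Fin m) ℂ) := {}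
  have hne : Nonempty (Fin n ⊕ Fin m) := by
    by_cases h : 0 < n
    · exact ⟨Sum.inl ⟨0, h⟩⟩
    · exact ⟨Sum.inr ⟨0, by omega⟩⟩
  obtain ⟨i0⟩ := hne
  haveI : Nontrivial (EuclideanSpace ℂ (Fin n ⊕ Fin m)) := by
    refine ⟨⟨0, EuclideanSpace.single i0 1, fun h => ?_⟩⟩
    have h0 := congrArg (· i0) h
    simp [EuclideanSpace.single_apply] at h0
  set c : ℝ := 1 - α*μ with hc
  set Ac : Matrix (Fin m) (Fin n) ℂ := A.map Complex.ofReal with hAc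
  set Bc : Matrix (Fin n ⊕ Fin m) (Fin n ⊕ Fin m) ℂ := Matrix.fromBlocks 0 Acᴴ (-Ac) 0 with hBc
  have hAcH : Acᴴ = Aᵀ.map Complex.ofReal := by
    ext i j
    simp [hAc, Matrix.conjTranspose_apply, Matrix.map_apply, Complex.conj_ofReal]
  have h00 : (0 : Matrix (Fin n) (Fin n) ℝ).map Complex.ofReal
      = (0 : Matrix (Fin n) (Fin n) ℂ) := Matrix.map_zero _ Complex.ofReal_zero
  have h0m : (0 : Matrix (Fin m) (Fin m) ℝ).map Complex.ofReal
      = (0 : Matrix (Fin m) (Fin m) ℂ) := Matrix.map_zero _ Complex.ofReal_zero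
  have hA' : (-A).map Complex.ofReal = -Ac := by
    ext i j
    simp [hAc, Matrix.map_apply]
  have hBrmap : (Matrix.fromBlocks (0 : Matrix (Fin n) (Fin n) ℝ) Aᵀ (-A) 0).map Complex.ofReal
      = Bc := by
    rw [Matrix.fromBlocks_map, h00, h0m, hA', ← hAcH, hBc]
  have hMc : (1 - α • Qgame μ A).map Complex.ofReal = (c:ℂ) • 1 - (α:ℂ) • Bc := by
    have h1 : (1 : Matrix (Fin n ⊕ Fin m) (Fin n ⊕ Fin m) ℝ) - α • Qgame μ A
        = c • 1 - α • Matrix.fromBlocks 0 Aᵀ (-A) 0 := by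
      rw [Qgame, hc]; module
    rw [h1, ← hBrmap]
    ext i j
    by_cases hij : i = j <;>
      simp [Matrix.map_apply, Matrix.one_apply, hij, smul_eq_mul] <;> push_cast <;> ring
  have hstarBc : star Bc = -Bc := by
    rw [Matrix.star_eq_conjTranspose, hBc, Matrix.fromBlocks_conjTranspose,
      Matrix.fromBlocks_neg]
    simp
  have hstarMc : star ((c:ℂ) • (1 : Matrix (Fin n ⊕ Fin m) (Fin n ⊕ Fin m) ℂ) - (α:ℂ) • Bc)
      = (c:ℂ) • 1 + (α:ℂ) • Bc := by
    rw [star_sub, star_smul, star_smul, star_one, hstarBc]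
    simp [Complex.star_def, Complex.conj_ofReal, smul_neg, sub_neg_eq_add]
  set Mc : Matrix (Fin n ⊕ Fin m) (Fin n ⊕ Fin m) ℂ := (c:ℂ) • 1 - (α:ℂ) • Bc with hMcdef
  haveI hnormal : IsStarNormal Mc := by
    constructor
    show star Mc * Mc = Mc * star Mc
    rw [hMcdef, hstarMc]
    simp only [add_mul, sub_mul, mul_add, mul_sub, smul_mul_assoc, mul_smul_comm, smul_smul,
      one_mul, mul_one]
    module
  have hstar_mul : star Mc * Mc
      = ((c^2 : ℝ) : ℂ) • 1 + ((α^2 : ℝ) : ℂ) • (star Bc * Bc) := by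
    have hnb : star Bc * Bc = -(Bc * Bc) := by rw [hstarBc, neg_mul]
    rw [hMcdef, hstarMc, hnb]
    simp only [add_mul, mul_sub, smul_mul_assoc, mul_smul_comm, smul_smul, one_mul, mul_one]
    push_cast
    module
  have hBnorm : ‖Bc‖ = spectralNormMat A := by
    rw [hBc, norm_skew_block, hAc, norm_map_ofReal]
    exact (Matrix.l2_opNorm_def A).symm
  have hsq : ‖Mc‖^2 = c^2 + α^2 * spectralNormMat A ^ 2 := by
    have h2 : ‖Mc‖^2 = ‖star Mc * Mc‖ := by
      rw [CStarRing.norm_star_mul_self]; ring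
    rw [h2, hstar_mul, Matrix.cstar_norm_def, map_add, _root_.map_smul, _root_.map_smul, _root_.map_one, _root_.map_mul]
    have hstar : Matrix.toEuclideanCLM (𝕜 := ℂ) (star Bc)
        = ContinuousLinearMap.adjoint (Matrix.toEuclideanCLM (𝕜 := ℂ) Bc) := by
      rw [map_star]
      exact ContinuousLinearMap.star_eq_adjoint _
    rw [hstar, norm_key _ (sq_nonneg c) (sq_nonneg α), ← Matrix.cstar_norm_def, hBnorm]
  have hnorm : ‖Mc‖ = Real.sqrt ((μ^2 + spectralNormMat A ^ 2) * α^2 - 2*μ*α + 1) := by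
    have h3 : ‖Mc‖ = Real.sqrt (c^2 + α^2 * spectralNormMat A ^ 2) := by
      rw [← hsq, Real.sqrt_sq (norm_nonneg _)]
    rw [h3]
    congr 1
    rw [hc]; ring
  unfold rhoMat
  rw [hMc]
  have hrad := IsStarNormal.spectralRadius_eq_nnnorm Mc
  rw [← hnorm, ofReal_norm]
  exact hrad

end L2Lemmas

/-- For the explicit Euler iteration matrix `Q(α) = I − αQ` of the quadratic
game: `ρ(Q(α)) = √((μ² + ‖A‖²)α² − 2μα + 1)`; `ρ(Q(α)) < 1` iff
`0 < α < 2μ/(μ² + ‖A‖²)`; and the minimum over admissible step sizes is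
`√(1 − μ²/(μ² + ‖A‖²))`, attained at `α = μ/(μ² + ‖A‖²)`. -/
theorem explicit_euler_spectral_radius {n m : ℕ} (hnm : 0 < n + m)
    (μ : ℝ) (hμ : 0 < μ) (A : Matrix (Fin m) (Fin n) ℝ) :
    (∀ α : ℝ, rhoMat (1 - α • Qgame μ A) =
        ENNReal.ofReal
          (Real.sqrt ((μ^2 + spectralNormMat A ^ 2) * α^2 - 2*μ*α + 1))) ∧
    (∀ α : ℝ, rhoMat (1 - α • Qgame μ A) < 1 ↔
        0 < α ∧ α < 2*μ / (μ^2 + spectralNormMat A ^ 2)) ∧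
    (rhoMat (1 - (μ / (μ^2 + spectralNormMat A ^ 2)) • Qgame μ A) =
        ENNReal.ofReal
          (Real.sqrt (1 - μ^2 / (μ^2 + spectralNormMat A ^ 2)))) ∧
    (∀ α : ℝ, 0 < α → α < 2*μ / (μ^2 + spectralNormMat A ^ 2) →
        rhoMat (1 - (μ / (μ^2 + spectralNormMat A ^ 2)) • Qgame μ A) ≤
          rhoMat (1 - α • Qgame μ A)) := by
  have P1 : ∀ α : ℝ, rhoMat (1 - α • Qgame μ A) =
      ENNReal.ofReal (Real.sqrt ((μ^2 + spectralNormMat A ^ 2) * α^2 - 2*μ*α + 1)) :=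
    fun α => rho_eq hnm μ A α
  have a0 : (0:ℝ) ≤ spectralNormMat A := norm_nonneg _
  set a : ℝ := spectralNormMat A with ha
  set S : ℝ := μ^2 + a^2 with hSdef
  have hSpos : 0 < S := by positivity
  refine ⟨P1, ?_, ?_, ?_⟩
  · intro α
    rw [P1 α, ENNReal.ofReal_lt_one, Real.sqrt_lt' one_pos, one_pow]
    constructor
    · intro h
      have hα : 0 < α := by
        by_contra hle
        push_neg at hle
        nlinarith [mul_nonneg hSpos.le (sq_nonneg α), mul_nonpos_of_nonneg_of_nonpos
          (by linarith : (0:ℝ) ≤ 2*μ) hle]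
      refine ⟨hα, ?_⟩
      rw [lt_div_iff₀ hSpos]
      nlinarith
    · rintro ⟨hα, hlt⟩
      rw [lt_div_iff₀ hSpos] at hlt
      nlinarith
  · rw [P1 _]
    congr 2
    field_simp
    ring
  · intro α hα1 hα2
    rw [P1, P1]
    refine ENNReal.ofReal_le_ofReal (Real.sqrt_le_sqrt ?_)
    have key2 : (S*α^2 - 2*μ*α + 1) - (S*(μ/S)^2 - 2*μ*(μ/S) + 1) = S*(α - μ/S)^2 := by
      field_simp
      ring
    nlinarith [mul_nonneg hSpos.le (sq_nonneg (α - μ/S))]
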